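/- For all natural numbers k and p, the value at x = 1 of the p-th derivative of the Chebyshev polynomial of the first kind T_k equals ∏_{i=0}^{p−1} (k² − i²)/(2i + 1). -/
import Mathlib
open Polynomial Finset

lemma cheb_ode (n : ℤ) :
    (1 - X ^ 2) * derivative (derivative (Chebyshev.T ℝ n)) - X * derivative (Chebyshev.T ℝ n)
      + (n : ℝ[X]) ^ 2 * Chebyshev.T ℝ n = 0 := by
  have h1 := Chebyshev.one_sub_X_sq_mul_derivative_T_eq_poly_in_T (R := ℝ) (n - 1)
  rw [show (n - 1 + 1 : ℤ) = n by ring] at h1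
  have hd := congr_arg derivative h1
  simp only [derivative_mul, derivative_sub, derivative_one, derivative_X, derivative_X_pow,
    derivative_intCast, derivative_add, Nat.cast_ofNat, map_ofNat] at hd
  have hU := Chebyshev.T_derivative_eq_U (R := ℝ) n
  have hU2 := Chebyshev.T_derivative_eq_U (R := ℝ) (n - 1)
  have hT := Chebyshev.T_eq_U_sub_X_mul_U (R := ℝ) n
  have hrec := Chebyshev.U_eq (R := ℝ) n
  linear_combination (norm := (push_cast; ring_nf)) hd + ((1 : ℝ[X]) - n) * X * hU
    + (n : ℝ[X]) * hU2 + (n : ℝ[X]) * ((n : ℝ[X]) - 1) * (hT + hrec)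

lemma ode_iter (P : ℝ[X]) (c : ℝ)
    (h : (1 - X ^ 2) * derivative (derivative P) - X * derivative P + C c * P = 0) :
    ∀ p : ℕ, (1 - X ^ 2) * derivative^[p + 2] P
      - C (2 * (p : ℝ) + 1) * X * derivative^[p + 1] P
      + C (c - (p : ℝ) ^ 2) * derivative^[p] P = 0 := by
  intro p
  induction p with
  | zero => simpa using h
  | succ p ih =>
    have hd := congr_arg derivative ih
    simp only [derivative_mul, derivative_sub, derivative_add, derivative_one, derivative_X,
      derivative_X_pow, derivative_C, derivative_zero, ← Function.iterate_succ_apply',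
      Nat.succ_eq_add_one, Nat.cast_ofNat, map_ofNat] at hd
    rw [show p + 2 + 1 = p + 3 by omega, show p + 1 + 1 = p + 2 by omega] at hd
    rw [show p + 1 + 2 = p + 3 by omega, show p + 1 + 1 = p + 2 by omega]
    simp only [map_sub, map_add, map_mul, map_one, map_ofNat, map_pow,
      Polynomial.C_eq_natCast] at hd ⊢
    push_cast
    linear_combination (norm := ring_nf) hd

lemma T_eval_one (n : ℤ) : (Chebyshev.T ℝ n).eval 1 = 1 := by
  have h := Polynomial.Chebyshev.T_real_cos 0 n
  simp only [Real.cos_zero, mul_zero] at h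
  simpa using h

/-- Boundary value at `x = 1` of the `p`-th derivative of the Chebyshev polynomial `T_k`:
`T_k^{(p)}(1) = ∏_{i=0}^{p-1} (k² - i²)/(2i + 1)`. -/
theorem chebyshev_deriv_eval_one (k p : ℕ) :
    (derivative^[p] (Polynomial.Chebyshev.T ℝ (k : ℤ))).eval 1
      = ∏ i ∈ Finset.range p, (((k : ℝ) ^ 2 - (i : ℝ) ^ 2) / (2 * (i : ℝ) + 1)) := by
  have hode : (1 - X ^ 2) * derivative (derivative (Chebyshev.T ℝ (k : ℤ)))
      - X * derivative (Chebyshev.T ℝ (k : ℤ)) + C ((k : ℝ) ^ 2) * Chebyshev.T ℝ (k : ℤ) = 0 := by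
    have h := cheb_ode (k : ℤ)
    rw [show (C ((k : ℝ) ^ 2)) = ((k : ℤ) : ℝ[X]) ^ 2 by
      rw [map_pow]; push_cast; simp [Polynomial.C_eq_natCast]]
    exact h
  have hrec : ∀ q : ℕ, (2 * (q : ℝ) + 1) * (derivative^[q + 1] (Chebyshev.T ℝ (k : ℤ))).eval 1
      = ((k : ℝ) ^ 2 - (q : ℝ) ^ 2) * (derivative^[q] (Chebyshev.T ℝ (k : ℤ))).eval 1 := by
    intro q
    have h := congr_arg (eval (1 : ℝ)) (ode_iter _ _ hode q)
    simp only [eval_add, eval_sub, eval_mul, eval_one, eval_pow, eval_X, eval_C,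
      eval_zero] at h
    linear_combination -h
  induction p with
  | zero => simpa using T_eval_one (k : ℤ)
  | succ p ih =>
    have h2 : (2 * (p : ℝ) + 1) ≠ 0 := by positivity
    have key : (derivative^[p + 1] (Chebyshev.T ℝ (k : ℤ))).eval 1
        = ((k : ℝ) ^ 2 - (p : ℝ) ^ 2) / (2 * (p : ℝ) + 1)
          * (derivative^[p] (Chebyshev.T ℝ (k : ℤ))).eval 1 := by
      rw [div_mul_eq_mul_div, eq_div_iff h2]
      linear_combination hrec p
    rw [Finset.prod_range_succ, ← ih, key]
    ring
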